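/- Let M be a regular 0-1 matrix that is not totally balanced, so that (after permutation) M(1,1) = M(1,2) = M(2,1) = 1 and M(2,2) = 0. Then two terms p, q over the combinatorial Rees matrix semigroup S_M are equal as functions if and only if G(p) = G(q), the leftmost variables of p and q coincide, and the rightmost variables of p and q coincide. -/

import Mathlib

/-- Multiplication in a combinatorial Rees matrix semigroup `S_M` with 0-1 structure
matrix `M` (zero modeled as `none`). -/
def cmul {I Λ : Type} (M : Λ → I → Bool) :
    Option (I × Λ) → Option (I × Λ) → Option (I × Λ)
  | some (i, l), some (j, c) => if M l j then some (i, c) else none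
  | _, _ => none

/-- Product of a nonempty list. -/
def prodWith {α : Type} (f : α → α → α) : List α → Option α
  | [] => none
  | a :: t => some (t.foldl f a)

/-- `a`, `b` occur as a consecutive pair in the word `w` (an edge of `G(w)`). -/
def consec {α : Type} (w : List α) (a b : α) : Prop :=
  ∃ l₁ l₂ : List α, w = l₁ ++ a :: b :: l₂

section Aux

variable {I Λ V : Type} (M : Λ → I → Bool)

lemma cmul_none_left (b : Option (I × Λ)) : cmul M none b = none := by
  rcases b with _ | ⟨c, d⟩ <;> rfl

lemma cmul_none_right (a : Option (I × Λ)) : cmul M a none = none := by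
  rcases a with _ | ⟨c, d⟩ <;> rfl

lemma foldl_none (l : List (Option (I × Λ))) : l.foldl (cmul M) none = none := by
  induction l with
  | nil => rfl
  | cons a t ih => simpa [cmul_none_left] using ih

lemma foldl_mem_none (l : List (Option (I × Λ))) (a : Option (I × Λ)) (h : none ∈ l) :
    l.foldl (cmul M) a = none := by
  induction l generalizing a with
  | nil => simp at h
  | cons b t ih =>
    rcases List.mem_cons.mp h with hb | ht
    · subst hb; simp [List.foldl_cons, cmul_none_right, foldl_none]
    · exact ih _ ht

lemma consec_singleton {a x y : V} : ¬ consec [a] x y := by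
  rintro ⟨l1, l2, h⟩
  rcases l1 with _ | ⟨c, l1⟩ <;> simp_all

lemma consec_cons_cons {a b : V} {t : List V} {x y : V} :
    consec (a :: b :: t) x y ↔ (a = x ∧ b = y) ∨ consec (b :: t) x y := by
  constructor
  · rintro ⟨l1, l2, h⟩
    rcases l1 with _ | ⟨c, l1⟩
    · simp only [List.nil_append, List.cons.injEq] at h
      exact Or.inl ⟨h.1, h.2.1⟩
    · simp only [List.cons_append, List.cons.injEq] at h
      exact Or.inr ⟨l1, l2, h.2⟩
  · rintro (⟨rfl, rfl⟩ | ⟨l1, l2, h⟩)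
    · exact ⟨[], t, rfl⟩
    · exact ⟨a :: l1, l2, by rw [List.cons_append, h]⟩

lemma chain'_iff_consec (R : V → V → Prop) (w : List V) :
    List.Chain' R w ↔ ∀ x y, consec w x y → R x y := by
  induction w with
  | nil =>
    constructor
    · rintro _ x y ⟨l1, l2, h⟩
      exact absurd h (by simp)
    · intro _; exact List.isChain_nil
  | cons a t ih =>
    cases t with
    | nil =>
      constructor
      · intro _ x y h; exact absurd h consec_singleton
      · intro _; exact List.isChain_singleton _
    | cons b t' =>
      rw [show List.Chain' R (a :: b :: t') ↔ R a b ∧ List.Chain' R (b :: t') from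
        List.isChain_cons_cons, ih]
      constructor
      · rintro ⟨hR, hall⟩ x y hc
        rcases consec_cons_cons.mp hc with ⟨rfl, rfl⟩ | hc'
        exacts [hR, hall _ _ hc']
      · intro hall
        exact ⟨hall a b (consec_cons_cons.mpr (Or.inl ⟨rfl, rfl⟩)),
          fun x y hc => hall x y (consec_cons_cons.mpr (Or.inr hc))⟩

lemma foldl_chain (f : V → I) (g : V → Λ) (t : List V) :
    ∀ (hd : V) (c : I),
      List.Chain' (fun x y => M (g x) (f y) = true) (hd :: t) →
      (t.map (fun v => some (f v, g v))).foldl (cmul M) (some (c, g hd)) =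
        some (c, g ((hd :: t).getLast (List.cons_ne_nil hd t))) := by
  induction t with
  | nil => intro hd c _; simp
  | cons b t' ih =>
    intro hd c hch
    have h12 := List.isChain_cons_cons.mp hch
    simp only [List.map_cons, List.foldl_cons]
    have hstep : cmul M (some (c, g hd)) (some (f b, g b)) = some (c, g b) := by
      simp [cmul, h12.1]
    rw [hstep, ih b c h12.2, List.getLast_cons (List.cons_ne_nil b t')]

lemma foldl_nochain (f : V → I) (g : V → Λ) (t : List V) :
    ∀ (hd : V) (c : I),
      ¬ List.Chain' (fun x y => M (g x) (f y) = true) (hd :: t) →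
      (t.map (fun v => some (f v, g v))).foldl (cmul M) (some (c, g hd)) = none := by
  induction t with
  | nil => intro hd c hch; exact absurd (List.isChain_singleton hd) hch
  | cons b t' ih =>
    intro hd c hch
    simp only [List.map_cons, List.foldl_cons]
    by_cases hR : M (g hd) (f b) = true
    · have : cmul M (some (c, g hd)) (some (f b, g b)) = some (c, g b) := by
        simp [cmul, hR]
      rw [this]
      exact ih b c (fun h => hch (List.isChain_cons_cons.mpr ⟨hR, h⟩))
    · have : cmul M (some (c, g hd)) (some (f b, g b)) = none := by
        simp [cmul, hR]
      rw [this]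
      exact foldl_none M _

lemma prod_some (e : V → Option (I × Λ)) (f : V → I) (g : V → Λ) (hd : V) (t : List V)
    (he : ∀ v ∈ hd :: t, e v = some (f v, g v))
    (hch : List.Chain' (fun x y => M (g x) (f y) = true) (hd :: t)) :
    (t.map e).foldl (cmul M) (e hd) =
      some (f hd, g ((hd :: t).getLast (List.cons_ne_nil hd t))) := by
  rw [he hd (List.mem_cons_self),
    List.map_congr_left (fun v hv => he v (List.mem_cons_of_mem hd hv))]
  exact foldl_chain M f g t hd (f hd) hch

lemma prod_nochain (e : V → Option (I × Λ)) (f : V → I) (g : V → Λ) (hd : V) (t : List V)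
    (he : ∀ v ∈ hd :: t, e v = some (f v, g v))
    (hch : ¬ List.Chain' (fun x y => M (g x) (f y) = true) (hd :: t)) :
    (t.map e).foldl (cmul M) (e hd) = none := by
  rw [he hd (List.mem_cons_self),
    List.map_congr_left (fun v hv => he v (List.mem_cons_of_mem hd hv))]
  exact foldl_nochain M f g t hd (f hd) hch

lemma prod_none_mem (e : V → Option (I × Λ)) (hd : V) (t : List V) (v0 : V)
    (hv : v0 ∈ hd :: t) (h0 : e v0 = none) :
    (t.map e).foldl (cmul M) (e hd) = none := by
  rcases List.mem_cons.mp hv with rfl | ht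
  · rw [h0]; exact foldl_none M _
  · exact foldl_mem_none M _ _ (List.mem_map.mpr ⟨v0, ht, h0⟩)

end Aux

/-- Let `M` be a regular 0-1 matrix that is not totally balanced, witnessed (after
permutation) by rows `α ≠ β` and columns `i ≠ j` with `M α i = M α j = M β i = 1`
and `M β j = 0`.  Two terms `p, q` over `S_M` are equal iff `G(p) = G(q)` (same
occurring variables and same edges), their leftmost variables coincide, and their
rightmost variables coincide. -/
theorem stmt17 (Λ I V : Type) [Fintype Λ] [Fintype I] (M : Λ → I → Bool)
    (hreg : (∀ l : Λ, ∃ i : I, M l i = true) ∧ (∀ i : I, ∃ l : Λ, M l i = true))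
    (α β : Λ) (i j : I) (hαβ : α ≠ β) (hij : i ≠ j)
    (h1 : M α i = true) (h2 : M α j = true) (h3 : M β i = true)
    (h4 : M β j = false)
    (ph : V) (pt : List V) (qh : V) (qt : List V) :
    (∀ e : V → Option (I × Λ),
        prodWith (cmul M) ((ph :: pt).map e) = prodWith (cmul M) ((qh :: qt).map e)) ↔
    ((∀ v : V, v ∈ ph :: pt ↔ v ∈ qh :: qt) ∧
     (∀ x y : V, consec (ph :: pt) x y ↔ consec (qh :: qt) x y) ∧
     ph = qh ∧
     (ph :: pt).getLast (by simp) = (qh :: qt).getLast (by simp)) := by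
  classical
  have hiff : ∀ e : V → Option (I × Λ),
      (prodWith (cmul M) ((ph :: pt).map e) = prodWith (cmul M) ((qh :: qt).map e)) ↔
      ((pt.map e).foldl (cmul M) (e ph) = (qt.map e).foldl (cmul M) (e qh)) := by
    intro e
    simp only [List.map_cons, prodWith, Option.some.injEq]
  constructor
  · intro H
    have H' : ∀ e : V → Option (I × Λ),
        (pt.map e).foldl (cmul M) (e ph) = (qt.map e).foldl (cmul M) (e qh) :=
      fun e => (hiff e).mp (H e)
    refine ⟨?_, ?_, ?_, ?_⟩
    · -- same variables
      intro v
      constructor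
      · intro hv
        by_contra hq
        set e : V → Option (I × Λ) := fun u => if u = v then none else some (i, α) with hedef
        have hp : (pt.map e).foldl (cmul M) (e ph) = none :=
          prod_none_mem M e ph pt v hv (by simp [hedef])
        have hqn : (qt.map e).foldl (cmul M) (e qh) =
            some (i, α) := by
          have := prod_some M e (fun _ => i) (fun _ => α) qh qt
            (fun u hu => by
              have : u ≠ v := fun h => hq (h ▸ hu)
              simp [hedef, this])
            ((chain'_iff_consec _ _).mpr (fun x y _ => h1))
          simpa using this
        rw [H' e, hqn] at hp
        cases hp
      · intro hv
        by_contra hp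
        set e : V → Option (I × Λ) := fun u => if u = v then none else some (i, α) with hedef
        have hq : (qt.map e).foldl (cmul M) (e qh) = none :=
          prod_none_mem M e qh qt v hv (by simp [hedef])
        have hpn : (pt.map e).foldl (cmul M) (e ph) = some (i, α) := by
          have := prod_some M e (fun _ => i) (fun _ => α) ph pt
            (fun u hu => by
              have : u ≠ v := fun h => hp (h ▸ hu)
              simp [hedef, this])
            ((chain'_iff_consec _ _).mpr (fun x y _ => h1))
          simpa using this
        rw [← H' e, hpn] at hq
        cases hq
    · -- same edges
      intro x y
      set f : V → I := fun v => if v = y then j else i with hf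
      set g : V → Λ := fun v => if v = x then β else α with hg
      set e : V → Option (I × Λ) := fun v => some (f v, g v) with hedef
      have he : ∀ w : List V, ∀ v ∈ w, e v = some (f v, g v) := fun _ _ _ => rfl
      have hRfalse : ¬ (M (g x) (f y) = true) := by simp [hf, hg, h4]
      have hRtrue : ∀ a b : V, ¬(a = x ∧ b = y) → M (g a) (f b) = true := by
        intro a b hab
        by_cases ha : a = x <;> by_cases hb : b = y
        · exact absurd ⟨ha, hb⟩ hab
        · subst ha; simpa [hg, hf, hb] using h3
        · subst hb; simpa [hg, hf, ha] using h2
        · simpa [hg, hf, ha, hb] using h1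
      have key : ∀ (hd : V) (t : List V),
          (consec (hd :: t) x y ↔ (t.map e).foldl (cmul M) (e hd) = none) := by
        intro hd t
        constructor
        · intro hc
          refine prod_nochain M e f g hd t (he _) (fun hch => ?_)
          exact hRfalse ((chain'_iff_consec _ _).mp hch x y hc)
        · intro hn
          by_contra hc
          have hch : List.Chain' (fun a b => M (g a) (f b) = true) (hd :: t) :=
            (chain'_iff_consec _ _).mpr (fun a b hab =>
              hRtrue a b (fun h => hc (h.1 ▸ h.2 ▸ hab)))
          rw [prod_some M e f g hd t (he _) hch] at hn
          cases hn
      rw [key ph pt, key qh qt, H' e]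
    · -- same head
      set f : V → I := fun v => if v = ph then j else i with hf
      set e : V → Option (I × Λ) := fun v => some (f v, α) with hedef
      have hch : ∀ w : List V, List.Chain' (fun a b => M α (f b) = true) w :=
        fun w => (chain'_iff_consec _ _).mpr (fun a b _ => by
          by_cases hb : b = ph <;> simp [hf, hb, h1, h2])
      have hp := prod_some M e f (fun _ => α) ph pt (fun _ _ => rfl) (hch _)
      have hq := prod_some M e f (fun _ => α) qh qt (fun _ _ => rfl) (hch _)
      rw [H' e, hq] at hp
      simp only [Option.some.injEq, Prod.mk.injEq] at hp
      have : f ph = f qh := hp.1.symm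
      by_contra hne
      have : j = i := by simpa [hf, Ne.symm hne] using this
      exact hij this.symm
    · -- same last
      set pl : V := (ph :: pt).getLast (List.cons_ne_nil ph pt) with hpl
      set g : V → Λ := fun v => if v = pl then β else α with hg
      set e : V → Option (I × Λ) := fun v => some (i, g v) with hedef
      have hch : ∀ w : List V, List.Chain' (fun a b => M (g a) i = true) w :=
        fun w => (chain'_iff_consec _ _).mpr (fun a b _ => by
          by_cases ha : a = pl <;> simp [hg, ha, h1, h3])
      have hp := prod_some M e (fun _ => i) g ph pt (fun _ _ => rfl) (hch _)
      have hq := prod_some M e (fun _ => i) g qh qt (fun _ _ => rfl) (hch _)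
      rw [H' e, hq] at hp
      simp only [Option.some.injEq, Prod.mk.injEq] at hp
      show pl = (qh :: qt).getLast (List.cons_ne_nil qh qt)
      by_contra hne
      have hne' : (qh :: qt).getLast (List.cons_ne_nil qh qt) ≠ pl := fun h => hne h.symm
      have : α = β := by
        have h5 := hp.2
        simp [hg, hne'] at h5
        exact h5 rfl
      exact hαβ this
  · rintro ⟨hmem, hcon, hhead, hlast⟩ e
    rw [hiff e]
    by_cases htot : ∀ v ∈ ph :: pt, ∃ a, e v = some a
    · set f : V → I := fun v => ((e v).getD (i, α)).1 with hf
      set g : V → Λ := fun v => ((e v).getD (i, α)).2 with hg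
      have hep : ∀ v ∈ ph :: pt, e v = some (f v, g v) := by
        intro v hv
        obtain ⟨a, ha⟩ := htot v hv
        simp [hf, hg, ha]
      have heq : ∀ v ∈ qh :: qt, e v = some (f v, g v) :=
        fun v hv => hep v ((hmem v).mpr hv)
      by_cases hch : List.Chain' (fun a b => M (g a) (f b) = true) (ph :: pt)
      · have hchq : List.Chain' (fun a b => M (g a) (f b) = true) (qh :: qt) :=
          (chain'_iff_consec _ _).mpr (fun a b hab =>
            (chain'_iff_consec _ _).mp hch a b ((hcon a b).mpr hab))
        rw [prod_some M e f g ph pt hep hch, prod_some M e f g qh qt heq hchq,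
          hlast, hhead]
      · have hchq : ¬ List.Chain' (fun a b => M (g a) (f b) = true) (qh :: qt) :=
          fun h => hch ((chain'_iff_consec _ _).mpr (fun a b hab =>
            (chain'_iff_consec _ _).mp h a b ((hcon a b).mp hab)))
        rw [prod_nochain M e f g ph pt hep hch, prod_nochain M e f g qh qt heq hchq]
    · push_neg at htot
      obtain ⟨v, hv, hvn⟩ := htot
      have hvnone : e v = none := by
        cases h : e v with
        | none => rfl
        | some a => exact absurd h (hvn a)
      rw [prod_none_mem M e ph pt v hv hvnone,
        prod_none_mem M e qh qt v ((hmem v).mp hv) hvnone]
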